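/- Let d > −1 with d ≠ 0 and let p be a probability vector on n ≥ 2 symbols sorted so that p_1 ≥ p_2 ≥ … ≥ p_n. If p_1 ≤ f^d(p_{n−1}, p_n), then there exists a codeword-length vector l attaining the optimal exponential redundancy R^d_opt(p) such that ∑_i 2^(−l_i) = 1 and every l_i equals either ⌊log₂ n⌋ or ⌈log₂ n⌉ (i.e., the optimal code can be represented by a complete tree). -/

import Mathlib

open Real Finset

/-- A valid codeword-length vector: all lengths at least 1 and the Kraft inequality holds. -/
def IsCode (n : ℕ) (l : Fin n → ℕ) : Prop :=
  (∀ i, 1 ≤ l i) ∧ ∑ i, (2 : ℝ) ^ (-(l i : ℝ)) ≤ 1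

/-- Exponential redundancy `R^d(p,l)`. -/
noncomputable def expRedundancy (n : ℕ) (d : ℝ) (p : Fin n → ℝ) (l : Fin n → ℕ) : ℝ :=
  (1 / d) * Real.logb 2 (∑ i, (p i) ^ (1 + d) * (2 : ℝ) ^ (d * (l i : ℝ)))

/-- Optimal exponential redundancy `R^d_opt(p)`. -/
noncomputable def expRedundancyOpt (n : ℕ) (d : ℝ) (p : Fin n → ℝ) : ℝ :=
  sInf { r | ∃ l : Fin n → ℕ, IsCode n l ∧ r = expRedundancy n d p l }

/-- The Huffman-like combining function `f^d(x,y)`. -/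
noncomputable def combine (d x y : ℝ) : ℝ :=
  ((2 : ℝ) ^ d * x ^ (1 + d) + (2 : ℝ) ^ d * y ^ (1 + d)) ^ (1 / (1 + d))


noncomputable def esgn (d : ℝ) : ℝ := if 0 < d then 1 else -1

lemma rpow2_neg_nat' (k : ℕ) : (2:ℝ) ^ (-(k:ℝ)) = ((2:ℝ)^k)⁻¹ := by
  rw [Real.rpow_neg (by norm_num), Real.rpow_natCast]

lemma esgn_rpow_le (d : ℝ) {x y : ℝ} (h : x ≤ y) :
    esgn d * (2:ℝ) ^ (d*x) ≤ esgn d * (2:ℝ) ^ (d*y) := by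
  unfold esgn
  split_ifs with h'
  · rw [one_mul, one_mul]
    exact Real.rpow_le_rpow_of_exponent_le (by norm_num) (by nlinarith)
  · have hd' : d ≤ 0 := le_of_not_gt h'
    have : d * y ≤ d * x := mul_le_mul_of_nonpos_left h hd'
    have := Real.rpow_le_rpow_of_exponent_le (by norm_num : (1:ℝ) ≤ 2) this
    nlinarith

lemma sum_ite3 {n : ℕ} {M : Type*} [AddCommGroup M] (g : Fin n → M) {i0 i1 i2 : Fin n}
    (h01 : i0 ≠ i1) (h02 : i0 ≠ i2) (h12 : i1 ≠ i2) (a b c : M) :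
    ∑ i, (if i = i0 then a else if i = i1 then b else if i = i2 then c else g i)
      = ∑ i, g i + (a - g i0) + (b - g i1) + (c - g i2) := by
  have hfun : (fun i => if i = i0 then a else if i = i1 then b else if i = i2 then c else g i)
      = Function.update (Function.update (Function.update g i2 c) i1 b) i0 a := by
    funext j
    simp only [Function.update_apply]
  have key : ∀ (f : Fin n → M) (i : Fin n) (v : M),
      ∑ j, Function.update f i v j = ∑ j, f j + (v - f i) := by
    intro f i v
    rw [Finset.sum_update_of_mem (Finset.mem_univ i)]
    rw [← Finset.sum_erase_add univ f (Finset.mem_univ i)]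
    rw [Finset.sdiff_singleton_eq_erase]
    abel
  have e0 := key (Function.update (Function.update g i2 c) i1 b) i0 a
  have e1 := key (Function.update g i2 c) i1 b
  have e2 := key g i2 c
  rw [hfun, e0, e1, e2]
  rw [Function.update_apply, Function.update_apply, Function.update_apply]
  simp only [if_neg h01, if_neg h02, if_neg h12]
  abel

def lstar (n : ℕ) : Fin n → ℕ :=
  fun i => if (i : ℕ) < 2 ^ (Nat.log 2 n + 1) - n then Nat.log 2 n else Nat.log 2 n + 1

lemma pow_log_le {n : ℕ} (hn : 2 ≤ n) : 2 ^ Nat.log 2 n ≤ n := Nat.pow_log_le_self 2 (by omega)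

lemma lt_pow_log (n : ℕ) : n < 2 ^ (Nat.log 2 n + 1) := Nat.lt_pow_succ_log_self (by norm_num) n

lemma lstar_monotone (n : ℕ) : Monotone (lstar n) := by
  intro i j hij
  have hij' : (i:ℕ) ≤ (j:ℕ) := hij
  unfold lstar
  split_ifs with h1 h2 h2 <;> omega

lemma lstar_one_le {n : ℕ} (hn : 2 ≤ n) : ∀ i, 1 ≤ lstar n i := by
  intro i
  have : 1 ≤ Nat.log 2 n := Nat.log_pos (by norm_num) hn
  unfold lstar; split_ifs <;> omega

lemma lstar_vals {n : ℕ} (hn : 2 ≤ n) :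
    ∀ i, lstar n i = Nat.log 2 n ∨ lstar n i = Nat.clog 2 n := by
  intro i
  unfold lstar
  split_ifs with h
  · exact Or.inl rfl
  · right
    have h1 : 2 ^ (Nat.log 2 n + 1) - n ≤ (i:ℕ) := le_of_not_gt h
    have h2 : (i:ℕ) < n := i.2
    have h3 : 2 ^ Nat.log 2 n ≤ n := pow_log_le hn
    have h4 : n < 2 ^ (Nat.log 2 n + 1) := lt_pow_log n
    have h5 : 2 ^ Nat.log 2 n < n := by
      rcases lt_or_eq_of_le h3 with h | h
      · exact h
      · exfalso; rw [pow_succ] at h1 h4; omega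
    have hle : Nat.clog 2 n ≤ Nat.log 2 n + 1 :=
      (Nat.clog_le_iff_le_pow (by norm_num)).mpr h4.le
    have hge : Nat.log 2 n + 1 ≤ Nat.clog 2 n :=
      (Nat.lt_clog_iff_pow_lt (by norm_num)).mpr h5
    omega

lemma lstar_kraft {n : ℕ} (hn : 2 ≤ n) : ∑ i : Fin n, (2:ℝ) ^ (-(lstar n i : ℝ)) = 1 := by
  classical
  set m := Nat.log 2 n with hm
  set A := 2 ^ (m + 1) - n with hA
  have h3 : 2 ^ m ≤ n := pow_log_le hn
  have h4 : n < 2 ^ (m + 1) := lt_pow_log n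
  have hAn : A ≤ n := by rw [hA, pow_succ]; omega
  set F : ℕ → ℝ := fun i => if i < A then ((2:ℝ)^m)⁻¹ else ((2:ℝ)^(m+1))⁻¹ with hF
  have hsum : ∑ i : Fin n, (2:ℝ) ^ (-(lstar n i : ℝ)) = ∑ i ∈ Finset.range n, F i := by
    rw [← Fin.sum_univ_eq_sum_range F n]
    apply Finset.sum_congr rfl
    intro i _
    simp only [hF, lstar]
    split_ifs <;> rw [rpow2_neg_nat']
  rw [hsum, Finset.range_eq_Ico, ← Finset.sum_Ico_consecutive _ (Nat.zero_le A) hAn]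
  have e1 : ∑ i ∈ Finset.Ico 0 A, F i = (A:ℝ) * ((2:ℝ)^m)⁻¹ := by
    have hc : ∀ i ∈ Finset.Ico 0 A, F i = ((2:ℝ)^m)⁻¹ := by
      intro i hi; simp only [hF]; exact if_pos (Finset.mem_Ico.mp hi).2
    rw [Finset.sum_congr rfl hc, Finset.sum_const, Nat.card_Ico, Nat.sub_zero, nsmul_eq_mul]
  have e2 : ∑ i ∈ Finset.Ico A n, F i = ((n - A : ℕ):ℝ) * ((2:ℝ)^(m+1))⁻¹ := by
    have hc : ∀ i ∈ Finset.Ico A n, F i = ((2:ℝ)^(m+1))⁻¹ := by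
      intro i hi; simp only [hF]; exact if_neg (not_lt.mpr (Finset.mem_Ico.mp hi).1)
    rw [Finset.sum_congr rfl hc, Finset.sum_const, Nat.card_Ico, nsmul_eq_mul]
  rw [e1, e2]
  have key : 2 * A + (n - A) = 2 ^ (m+1) := by rw [hA, pow_succ] at *; omega
  have keyR : 2 * (A:ℝ) + ((n:ℝ) - (A:ℝ)) = 2^m * 2 := by
    have := congrArg (fun x : ℕ => (x:ℝ)) key
    push_cast [hAn] at this
    rw [pow_succ] at this
    exact_mod_cast this
  rw [Nat.cast_sub hAn, pow_succ]
  calc (A:ℝ) * ((2:ℝ)^m)⁻¹ + ((n:ℝ) - (A:ℝ)) * ((2:ℝ)^m * 2)⁻¹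
      = (2 * (A:ℝ) + ((n:ℝ) - (A:ℝ))) * ((2:ℝ)^m * 2)⁻¹ := by
        have h2m : (2:ℝ)^m ≠ 0 := by positivity
        field_simp
    _ = ((2:ℝ)^m * 2) * ((2:ℝ)^m * 2)⁻¹ := by rw [keyR]
    _ = 1 := mul_inv_cancel₀ (by positivity)

lemma delta_core {e w1 w2 w3 A B c : ℝ} (h3 : 0 ≤ w3) (h23 : w3 ≤ w2)
    (h1 : w1 ≤ c * (w2 + w3)) (hchalf : 1/2 < c)
    (hslack : 0 ≤ e * (A*c) - e * A) (hAB : e * (A*c) ≤ e * B) :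
    e * (w1 * (A*c) + (w2 * (A*c) + w3 * B)) ≤
    e * (w1 * A + (w2 * (B*c) + w3 * (B*c))) := by
  have hF : 0 ≤ c*w2 + w3*(c-1) := by nlinarith
  have t1 : w1 * (e*(A*c) - e*A) ≤ (c*(w2+w3)) * (e*(A*c) - e*A) :=
    mul_le_mul_of_nonneg_right h1 hslack
  have t2 : (e*(A*c) - e*B) * (c*w2 + w3*(c-1)) ≤ 0 :=
    mul_nonpos_iff.mpr (Or.inr ⟨by linarith, hF⟩)
  nlinarith [t1, t2]

lemma delta_ineq {d : ℝ} (hd : -1 < d) {w1 w2 w3 : ℝ} (h3 : 0 ≤ w3) (h23 : w3 ≤ w2)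
    (h1 : w1 ≤ (2:ℝ)^d * (w2 + w3)) {x y : ℝ} (hxy : x + 2 ≤ y) :
    esgn d * (w1 * (2:ℝ)^(d*(x+1)) + (w2 * (2:ℝ)^(d*(x+1)) + w3 * (2:ℝ)^(d*(y-1)))) ≤
    esgn d * (w1 * (2:ℝ)^(d*x) + (w2 * (2:ℝ)^(d*y) + w3 * (2:ℝ)^(d*y))) := by
  have two_pos : (0:ℝ) < 2 := by norm_num
  have hAc : (2:ℝ)^(d*(x+1)) = (2:ℝ)^(d*x) * (2:ℝ)^d := by
    rw [mul_add, mul_one, Real.rpow_add two_pos]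
  have hB : (2:ℝ)^(d*y) = (2:ℝ)^(d*(y-1)) * (2:ℝ)^d := by
    have hdy : d*y = d*(y-1) + d := by ring
    rw [hdy, Real.rpow_add two_pos]
  have hchalf : 1/2 < (2:ℝ)^d := by
    have := Real.rpow_lt_rpow_of_exponent_lt (by norm_num : (1:ℝ) < 2) hd
    rwa [Real.rpow_neg_one, show ((2:ℝ))⁻¹ = 1/2 by norm_num] at this
  have hslack : 0 ≤ esgn d * ((2:ℝ)^(d*x) * (2:ℝ)^d) - esgn d * (2:ℝ)^(d*x) := by
    have := esgn_rpow_le d (le_of_lt (by linarith : x < x + 1))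
    rw [hAc] at this
    linarith
  have hAB : esgn d * ((2:ℝ)^(d*x) * (2:ℝ)^d) ≤ esgn d * (2:ℝ)^(d*(y-1)) := by
    have := esgn_rpow_le d (by linarith : x + 1 ≤ y - 1)
    rwa [hAc] at this
  rw [hAc, hB]
  exact delta_core h3 h23 h1 hchalf hslack hAB

lemma cost_sort {n : ℕ} (d : ℝ) (p : Fin n → ℝ) (hp : ∀ i, 0 < p i)
    (hd1 : (0:ℝ) ≤ 1 + d)
    (hsorted : ∀ i j : Fin n, i ≤ j → p j ≤ p i) (l : Fin n → ℕ) :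
    esgn d * (∑ i, p i ^ (1+d) * (2:ℝ)^(d * (l (Tuple.sort l i) : ℝ))) ≤
    esgn d * (∑ i, p i ^ (1+d) * (2:ℝ)^(d * (l i : ℝ))) := by
  classical
  set τ := Tuple.sort l with hτ
  set w : Fin n → ℝ := fun i => p i ^ (1+d) with hw
  set g : Fin n → ℝ := fun i => esgn d * (2:ℝ)^(d * (l (τ i) : ℝ)) with hg
  have hmono : Monotone (l ∘ ⇑τ) := Tuple.monotone_sort l
  have hanti : Antivary w g := by
    intro i j hgij
    have hij : i ≤ j := by
      by_contra hcon
      push_neg at hcon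
      have h1 : l (τ j) ≤ l (τ i) := hmono (le_of_lt hcon)
      have := esgn_rpow_le d (by exact_mod_cast h1 : ((l (τ j)):ℝ) ≤ ((l (τ i)):ℝ))
      simp only [hg] at hgij
      linarith
    exact Real.rpow_le_rpow (hp j).le (hsorted i j hij) hd1
  have key := hanti.sum_smul_le_sum_smul_comp_perm (σ := τ⁻¹)
  simp only [smul_eq_mul] at key
  have hgi : ∀ i, g (τ⁻¹ i) = esgn d * (2:ℝ)^(d * (l i : ℝ)) := by
    intro i
    simp only [hg]
    congr 2
    rw [show ⇑(τ⁻¹) = ⇑τ.symm from rfl, Equiv.apply_symm_apply]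
  calc esgn d * (∑ i, p i ^ (1+d) * (2:ℝ)^(d * (l (τ i) : ℝ)))
      = ∑ i, w i * g i := by
        rw [Finset.mul_sum]; exact Finset.sum_congr rfl (fun i _ => by simp only [hw, hg]; ring)
    _ ≤ ∑ i, w i * g (τ⁻¹ i) := key
    _ = esgn d * (∑ i, p i ^ (1+d) * (2:ℝ)^(d * (l i : ℝ))) := by
        rw [Finset.mul_sum]
        exact Finset.sum_congr rfl (fun i _ => by rw [hgi i]; simp only [hw]; ring)

lemma kraft_nat {n : ℕ} (l : Fin n → ℕ) {L : ℕ} (hL : ∀ i, l i ≤ L) :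
    ((∑ i, 2^(L - l i) : ℕ) : ℝ) = 2^L * ∑ i, (2:ℝ)^(-(l i:ℝ)) := by
  push_cast
  rw [Finset.mul_sum]
  apply Finset.sum_congr rfl
  intro i _
  rw [rpow2_neg_nat']
  have h := Nat.sub_add_cancel (hL i)
  have key : (2:ℝ)^(L - l i) * 2^(l i) = 2^L := by rw [← pow_add, h]
  have h2 : ((2:ℝ)^(l i)) ≠ 0 := by positivity
  rw [eq_mul_inv_iff_mul_eq₀ h2]
  exact key

lemma two_at_max {n : ℕ} (hn : 2 ≤ n) (l : Fin n → ℕ) (hmono : Monotone l)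
    (h1 : ∀ i, 1 ≤ l i) (hK : ∑ i, (2:ℝ)^(-(l i:ℝ)) = 1) :
    l ⟨n-2, by grind⟩ = l ⟨n-1, by grind⟩ := by
  classical
  set last : Fin n := ⟨n-1, by grind⟩ with hlast
  set L := l last with hLdef
  have hmax : ∀ i, l i ≤ L := by
    intro i
    exact hmono (by simp [hlast, Fin.le_def]; omega : i ≤ last)
  have hnatR := kraft_nat l hmax
  rw [hK, mul_one] at hnatR
  have hnat : ∑ i, 2^(L - l i) = 2^L := by exact_mod_cast hnatR
  set T := univ.filter (fun i => l i = L) with hT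
  have hsplit : ∑ i ∈ T, 2^(L - l i) + ∑ i ∈ univ.filter (fun i => ¬ l i = L), 2^(L - l i)
      = ∑ i : Fin n, 2^(L - l i) := Finset.sum_filter_add_sum_filter_not _ _ _
  have hTsum : ∑ i ∈ T, 2^(L - l i) = T.card := by
    rw [Finset.sum_congr rfl (fun i hi => ?_), Finset.sum_const, smul_eq_mul, mul_one]
    have := (Finset.mem_filter.mp hi).2
    rw [this, Nat.sub_self, pow_zero]
  have hEvenRest : Even (∑ i ∈ univ.filter (fun i => ¬ l i = L), 2^(L - l i)) := by
    apply Finset.even_sum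
    intro i hi
    have hne := (Finset.mem_filter.mp hi).2
    have hlt : l i < L := lt_of_le_of_ne (hmax i) hne
    have : L - l i ≠ 0 := by omega
    exact (Nat.even_pow.mpr ⟨even_two, this⟩)
  have hL1 : 1 ≤ L := h1 last
  have hEvenL : Even (2^L : ℕ) := Nat.even_pow.mpr ⟨even_two, by omega⟩
  have hEvenT : Even T.card := by
    obtain ⟨a, ha⟩ := hEvenRest
    obtain ⟨b, hb⟩ := hEvenL
    have := hsplit.trans hnat
    rw [hTsum] at this
    exact ⟨b - a, by omega⟩
  have hmem : last ∈ T := Finset.mem_filter.mpr ⟨Finset.mem_univ _, rfl⟩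
  have hcard1 : 1 ≤ T.card := Finset.card_pos.mpr ⟨last, hmem⟩
  have hcard2 : 2 ≤ T.card := by obtain ⟨k, hk⟩ := hEvenT; omega
  obtain ⟨x, hx, y, hy, hxy⟩ := Finset.one_lt_card.mp hcard2
  have hex : ∃ z ∈ T, z ≠ last := by
    by_cases hxl : x = last
    · exact ⟨y, hy, by rw [← hxl]; exact fun h => hxy h.symm⟩
    · exact ⟨x, hx, hxl⟩
  obtain ⟨z, hzT, hzne⟩ := hex
  have hzL : l z = L := (Finset.mem_filter.mp hzT).2
  have hzval : (z : ℕ) ≤ n - 2 := by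
    have h2 : (z:ℕ) < n := z.2
    have h3 : (z:ℕ) ≠ n - 1 := fun h => hzne (Fin.ext h)
    omega
  have hle1 : z ≤ (⟨n-2, by grind⟩ : Fin n) := by simp [Fin.le_def]; omega
  have hle2 : (⟨n-2, by grind⟩ : Fin n) ≤ last := by simp [hlast, Fin.le_def]; omega
  have := hmono hle1
  have := hmono hle2
  omega

lemma full_flat_eq_lstar {n : ℕ} (hn : 2 ≤ n) (l : Fin n → ℕ) (hmono : Monotone l)
    (hK : ∑ i, (2:ℝ)^(-(l i:ℝ)) = 1)
    (hflat : l ⟨n-1, by grind⟩ ≤ l ⟨0, by grind⟩ + 1) : l = lstar n := by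
  classical
  set i0 : Fin n := ⟨0, by omega⟩ with hi0
  set last : Fin n := ⟨n-1, by grind⟩ with hlast
  obtain ⟨u, hu⟩ : ∃ u, u = l i0 := ⟨_, rfl⟩
  have hlow : ∀ i, u ≤ l i := by
    intro i
    rw [hu]
    exact hmono (by simp [hi0, Fin.le_def] : i0 ≤ i)
  have hhigh : ∀ i, l i ≤ u + 1 := by
    intro i
    have h2 : l i ≤ l last := hmono (by simp [hlast, Fin.le_def]; omega : i ≤ last)
    have h3 : l last ≤ l i0 + 1 := hflat
    omega
  have hvals : ∀ i, l i = u ∨ l i = u + 1 := by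
    intro i; have := hlow i; have := hhigh i; omega
  have hnatR := kraft_nat l hhigh
  rw [hK, mul_one] at hnatR
  have hnat : ∑ i, 2^(u + 1 - l i) = 2^(u+1) := by exact_mod_cast hnatR
  obtain ⟨A, hA⟩ : ∃ A, (univ.filter (fun i => l i = u)).card = A := ⟨_, rfl⟩
  have hsplit : ∑ i ∈ univ.filter (fun i => l i = u), 2^(u+1 - l i)
      + ∑ i ∈ univ.filter (fun i => ¬ l i = u), 2^(u+1 - l i)
      = ∑ i : Fin n, 2^(u+1 - l i) := Finset.sum_filter_add_sum_filter_not _ _ _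
  have hSsum : ∑ i ∈ univ.filter (fun i => l i = u), 2^(u+1 - l i) = 2 * A := by
    have hc : ∀ i ∈ univ.filter (fun i => l i = u), 2^(u+1 - l i) = 2 := by
      intro i hi
      have := (Finset.mem_filter.mp hi).2
      rw [this, show u + 1 - u = 1 by omega, pow_one]
    rw [Finset.sum_congr rfl hc, Finset.sum_const, smul_eq_mul, hA, mul_comm]
  have hAn : A ≤ n := by
    rw [← hA]
    calc (univ.filter (fun i => l i = u)).card ≤ univ.card :=
          Finset.card_le_card (Finset.filter_subset _ _)
    _ = n := by rw [Finset.card_univ, Fintype.card_fin]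
  have hccard : (univ.filter (fun i => ¬ l i = u)).card = n - A := by
    have h := Finset.card_filter_add_card_filter_not
      (s := (univ : Finset (Fin n))) (p := fun i => l i = u)
    rw [Finset.card_univ, Fintype.card_fin, hA] at h
    omega
  have hSCsum : ∑ i ∈ univ.filter (fun i => ¬ l i = u), 2^(u+1 - l i)
      = n - A := by
    have hc : ∀ i ∈ univ.filter (fun i => ¬ l i = u), 2^(u+1 - l i) = 1 := by
      intro i hi
      have hne := (Finset.mem_filter.mp hi).2
      have hval : l i = u + 1 := by
        rcases hvals i with h | h
        · exact absurd h hne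
        · exact h
      rw [hval, Nat.sub_self, pow_zero]
    rw [Finset.sum_congr rfl hc, Finset.sum_const, smul_eq_mul, mul_one, hccard]
  have hkey : 2 * A + (n - A) = 2^(u+1) := by rw [← hSsum, ← hSCsum, hsplit, hnat]
  have hA1 : 1 ≤ A := by
    rw [← hA]
    exact Finset.card_pos.mpr ⟨i0, Finset.mem_filter.mpr ⟨Finset.mem_univ _, hu.symm⟩⟩
  have hpow : (2:ℕ)^(u+1) = 2 * 2^u := by rw [pow_succ]; ring
  have h2un : 2^u ≤ n := by omega
  have hn2u : n < 2^(u+1) := by omega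
  have hlog : Nat.log 2 n = u := Nat.log_eq_of_pow_le_of_lt_pow h2un hn2u
  have hAval : A = 2^(u+1) - n := by omega
  funext i
  unfold lstar
  rw [hlog, ← hAval]
  rcases hvals i with h | h
  · have hsub : Finset.Iic i ⊆ univ.filter (fun i => l i = u) := by
      intro j hj
      have hji : j ≤ i := Finset.mem_Iic.mp hj
      have := hmono hji
      have := hlow j
      exact Finset.mem_filter.mpr ⟨Finset.mem_univ _, by omega⟩
    have hcard : (i:ℕ) + 1 ≤ A := by
      have := Finset.card_le_card hsub
      rwa [Fin.card_Iic, hA] at this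
    rw [if_pos (by omega), h]
  · have hsub : univ.filter (fun i => l i = u) ⊆ Finset.Iio i := by
      intro j hj
      have hjv : l j = u := (Finset.mem_filter.mp hj).2
      rw [Finset.mem_Iio]
      by_contra hcon
      push_neg at hcon
      have := hmono hcon
      omega
    have hcard : A ≤ (i:ℕ) := by
      have := Finset.card_le_card hsub
      rwa [Fin.card_Iio, hA] at this
    rw [if_neg (by omega), h]

lemma sum_upd {n : ℕ} {M : Type*} [AddCommGroup M] (f : Fin n → M) (i : Fin n) (v : M) :
    ∑ j, Function.update f i v j = ∑ j, f j + (v - f i) := by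
  rw [Finset.sum_update_of_mem (Finset.mem_univ i)]
  rw [← Finset.sum_erase_add univ f (Finset.mem_univ i)]
  rw [Finset.sdiff_singleton_eq_erase]
  abel

lemma shorten_step {n : ℕ} (hn : 2 ≤ n) {d : ℝ}
    (p : Fin n → ℝ) (hp : ∀ i, 0 < p i) (l' : Fin n → ℕ)
    (hmono : Monotone l') (h1' : ∀ i, 1 ≤ l' i)
    (hlt : ∑ i, (2:ℝ)^(-(l' i:ℝ)) < 1) :
    ∃ l'' : Fin n → ℕ, IsCode n l'' ∧ (∑ i, l'' i) + 1 ≤ ∑ i, l' i ∧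
      esgn d * (∑ i, p i ^ (1+d) * (2:ℝ)^(d * (l'' i : ℝ)))
        ≤ esgn d * (∑ i, p i ^ (1+d) * (2:ℝ)^(d * (l' i : ℝ))) := by
  classical
  set i2 : Fin n := ⟨n-1, by grind⟩ with hi2def
  have hmax : ∀ i, l' i ≤ l' i2 := by
    intro i
    exact hmono (by show (i:ℕ) ≤ n-1; omega : i ≤ i2)
  have hL2 : 2 ≤ l' i2 := by
    by_contra hcon
    have hallone : ∀ i, l' i = 1 := by
      intro i
      have := h1' i
      have := hmax i
      omega
    have heq : ∑ i, (2:ℝ)^(-(l' i:ℝ)) = ∑ _i : Fin n, (2:ℝ)^(-(1:ℝ)) :=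
      Finset.sum_congr rfl (fun i _ => by rw [hallone i]; norm_num)
    rw [heq, Finset.sum_const, Finset.card_univ, Fintype.card_fin,
      nsmul_eq_mul, Real.rpow_neg_one] at hlt
    have hn2 : (2:ℝ) ≤ (n:ℝ) := by exact_mod_cast hn
    nlinarith [hlt]
  have hnatR := kraft_nat l' hmax
  have hSlt : (∑ i, 2^(l' i2 - l' i) : ℕ) < 2^(l' i2) := by
    have h2pos : (0:ℝ) < 2^(l' i2) := by positivity
    have hcast : ((∑ i, 2^(l' i2 - l' i) : ℕ):ℝ) < 2^(l' i2) := by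
      rw [hnatR]
      nlinarith [hlt, h2pos]
    exact_mod_cast hcast
  have hSle : ((∑ i, 2^(l' i2 - l' i) : ℕ):ℝ) + 1 ≤ 2^(l' i2) := by
    have hs : (∑ i, 2^(l' i2 - l' i) : ℕ) + 1 ≤ 2^(l' i2) := hSlt
    exact_mod_cast hs
  have hkplus : ∑ i, (2:ℝ)^(-(l' i:ℝ)) + (2:ℝ)^(-(l' i2:ℝ)) ≤ 1 := by
    have h2pos : (0:ℝ) < 2^(l' i2) := by positivity
    rw [hnatR] at hSle
    rw [rpow2_neg_nat']
    have h2 : (0:ℝ) < ((2:ℝ)^(l' i2))⁻¹ := by positivity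
    have hcancel : (2:ℝ)^(l' i2) * ((2:ℝ)^(l' i2))⁻¹ = 1 := mul_inv_cancel₀ (ne_of_gt h2pos)
    have hKeq : (2:ℝ)^(l' i2) * (∑ i, (2:ℝ)^(-(l' i:ℝ))) * ((2:ℝ)^(l' i2))⁻¹
        = ∑ i, (2:ℝ)^(-(l' i:ℝ)) := by
      field_simp
    linarith [mul_le_mul_of_nonneg_right hSle h2.le, hKeq, hcancel]
  refine ⟨Function.update l' i2 (l' i2 - 1), ?_, ?_, ?_⟩
  · constructor
    · intro i
      simp only [Function.update_apply]
      split_ifs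
      · omega
      · exact h1' i
    · have hkfun : ∀ i, (2:ℝ)^(-((Function.update l' i2 (l' i2 - 1)) i:ℝ)) =
          Function.update (fun i => (2:ℝ)^(-(l' i:ℝ))) i2 ((2:ℝ)^(-((l' i2 - 1:ℕ):ℝ))) i := by
        intro i
        simp only [Function.update_apply]
        split_ifs <;> rfl
      have hkneg : (2:ℝ)^(-((l' i2 - 1:ℕ):ℝ)) = 2 * (2:ℝ)^(-(l' i2:ℝ)) := by
        rw [rpow2_neg_nat', rpow2_neg_nat']
        have hLsplit : (2:ℝ)^(l' i2) = 2^(l' i2 - 1) * 2 := by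
          rw [← pow_succ]
          congr 1
          omega
        rw [hLsplit]
        have p2 : (0:ℝ) < 2^(l' i2 - 1) := by positivity
        field_simp
      rw [Finset.sum_congr rfl (fun i _ => hkfun i),
        sum_upd (fun i => (2:ℝ)^(-(l' i:ℝ))) i2 _, hkneg]
      linarith [hkplus]
  · have hZfun : ∀ i, (((Function.update l' i2 (l' i2 - 1)) i:ℕ):ℤ) =
        Function.update (fun i => ((l' i:ℕ):ℤ)) i2 ((l' i2:ℤ) - 1) i := by
      intro i
      simp only [Function.update_apply]
      split_ifs <;> omega
    have hZ := sum_upd (fun i => ((l' i:ℕ):ℤ)) i2 ((l' i2:ℤ) - 1)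
    rw [← Finset.sum_congr rfl (fun i _ => hZfun i)] at hZ
    have hcast1 : ((∑ i, (Function.update l' i2 (l' i2 - 1)) i : ℕ):ℤ)
        = ∑ i, (((Function.update l' i2 (l' i2 - 1)) i:ℕ):ℤ) := by push_cast; rfl
    have hcast2 : ((∑ i, l' i : ℕ):ℤ) = ∑ i, ((l' i:ℕ):ℤ) := by push_cast; rfl
    omega
  · have hcfun : ∀ i, p i ^ (1+d) * (2:ℝ)^(d * ((Function.update l' i2 (l' i2 - 1)) i:ℝ)) =
        Function.update (fun i => p i ^ (1+d) * (2:ℝ)^(d * (l' i:ℝ))) i2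
          (p i2 ^ (1+d) * (2:ℝ)^(d * ((l' i2 - 1:ℕ):ℝ))) i := by
      intro i
      simp only [Function.update_apply]
      split_ifs with hi
      · subst hi; rfl
      · rfl
    have hc2 : ((l' i2 - 1:ℕ):ℝ) = (l' i2:ℝ) - 1 := by
      rw [Nat.cast_sub (by omega)]
      norm_num
    have hterm : esgn d * (p i2 ^ (1+d) * (2:ℝ)^(d * ((l' i2:ℝ) - 1)))
        ≤ esgn d * (p i2 ^ (1+d) * (2:ℝ)^(d * (l' i2:ℝ))) := by
      have hmono2 := esgn_rpow_le d (show (l' i2:ℝ) - 1 ≤ (l' i2:ℝ) by linarith)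
      have hw : 0 ≤ p i2 ^ (1+d) := Real.rpow_nonneg (hp i2).le _
      nlinarith [hmono2, hw]
    rw [Finset.sum_congr rfl (fun i _ => hcfun i),
      sum_upd (fun i => p i ^ (1+d) * (2:ℝ)^(d * (l' i:ℝ))) i2 _, hc2]
    linarith [hterm]

lemma exchange_step {n : ℕ} (hn : 2 ≤ n) {d : ℝ} (hd : -1 < d)
    (p : Fin n → ℝ) (hp : ∀ i, 0 < p i)
    (hsorted : ∀ i j : Fin n, i ≤ j → p j ≤ p i)
    (hcond : p ⟨0, by grind⟩ ^ (1+d) ≤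
      (2:ℝ)^d * (p ⟨n-2, by grind⟩ ^ (1+d) + p ⟨n-1, by grind⟩ ^ (1+d)))
    (l' : Fin n → ℕ) (hmono : Monotone l') (h1' : ∀ i, 1 ≤ l' i)
    (hfull : ∑ i, (2:ℝ)^(-(l' i:ℝ)) = 1)
    (hflat : ¬ (l' ⟨n-1, by grind⟩ ≤ l' ⟨0, by grind⟩ + 1)) :
    ∃ l'' : Fin n → ℕ, IsCode n l'' ∧ (∑ i, l'' i) + 1 ≤ ∑ i, l' i ∧
      esgn d * (∑ i, p i ^ (1+d) * (2:ℝ)^(d * (l'' i : ℝ)))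
        ≤ esgn d * (∑ i, p i ^ (1+d) * (2:ℝ)^(d * (l' i : ℝ))) := by
  classical
  obtain ⟨i0, hi0⟩ : ∃ i : Fin n, i = ⟨0, by omega⟩ := ⟨_, rfl⟩
  obtain ⟨i1, hi1⟩ : ∃ i : Fin n, i = ⟨n-2, by grind⟩ := ⟨_, rfl⟩
  obtain ⟨i2, hi2⟩ : ∃ i : Fin n, i = ⟨n-1, by grind⟩ := ⟨_, rfl⟩
  have hv0 : (i0:ℕ) = 0 := by rw [hi0]
  have hv1 : (i1:ℕ) = n-2 := by rw [hi1]
  have hv2 : (i2:ℕ) = n-1 := by rw [hi2]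
  have hflat' : ¬ (l' i2 ≤ l' i0 + 1) := by rw [hi0, hi2]; exact hflat
  have hLu : l' i0 + 2 ≤ l' i2 := by omega
  have htwo' : l' i1 = l' i2 := by rw [hi1, hi2]; exact two_at_max hn l' hmono h1' hfull
  have hn3 : 3 ≤ n := by
    by_contra hcon
    have hi : i0 = i1 := Fin.ext (by omega)
    rw [hi] at hLu
    omega
  have h01 : i0 ≠ i1 := Fin.ne_of_val_ne (by omega)
  have h02 : i0 ≠ i2 := Fin.ne_of_val_ne (by omega)
  have h12 : i1 ≠ i2 := Fin.ne_of_val_ne (by omega)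
  have hcond' : p i0 ^ (1+d) ≤ (2:ℝ)^d * (p i1 ^ (1+d) + p i2 ^ (1+d)) := by
    rw [hi0, hi1, hi2]; exact hcond
  have h1le2 : i1 ≤ i2 := by rw [Fin.le_def]; omega
  have hL2 : 2 ≤ l' i2 := by have := h1' i0; omega
  refine ⟨fun i => if i = i0 then l' i0 + 1 else if i = i1 then l' i0 + 1
      else if i = i2 then l' i2 - 1 else l' i, ?_, ?_, ?_⟩
  · constructor
    · intro i
      have := h1' i
      dsimp only
      split_ifs <;> omega
    · have hkfun : ∀ i, (2:ℝ)^(-(((fun i => if i = i0 then l' i0 + 1 else if i = i1 then l' i0 + 1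
          else if i = i2 then l' i2 - 1 else l' i) i : ℕ):ℝ)) =
          (if i = i0 then (2:ℝ)^(-((l' i0 + 1 : ℕ):ℝ))
           else if i = i1 then (2:ℝ)^(-((l' i0 + 1 : ℕ):ℝ))
           else if i = i2 then (2:ℝ)^(-((l' i2 - 1 : ℕ):ℝ))
           else (2:ℝ)^(-(l' i:ℝ))) := by
        intro i
        dsimp only
        split_ifs <;> rfl
      rw [Finset.sum_congr rfl (fun i _ => hkfun i),
        sum_ite3 (fun i => (2:ℝ)^(-(l' i:ℝ))) h01 h02 h12, hfull, htwo']
      obtain ⟨u, hu⟩ : ∃ u, l' i0 = u := ⟨_, rfl⟩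
      obtain ⟨L, hL⟩ : ∃ L, l' i2 = L := ⟨_, rfl⟩
      rw [hL] at hL2
      rw [hu, hL]
      rw [rpow2_neg_nat', rpow2_neg_nat', rpow2_neg_nat', rpow2_neg_nat']
      have hLsplit : (2:ℝ)^L = 2^(L-1) * 2 := by
        rw [← pow_succ]
        congr 1
        omega
      rw [pow_succ, hLsplit]
      have p1 : (0:ℝ) < 2^u := by positivity
      have p2 : (0:ℝ) < 2^(L-1) := by positivity
      apply le_of_eq
      field_simp
      ring
  · have hZfun : ∀ i, (((fun i => if i = i0 then l' i0 + 1 else if i = i1 then l' i0 + 1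
        else if i = i2 then l' i2 - 1 else l' i) i : ℕ):ℤ) =
        (if i = i0 then ((l' i0 : ℤ) + 1)
         else if i = i1 then ((l' i0:ℤ) + 1)
         else if i = i2 then ((l' i2:ℤ) - 1) else (l' i:ℤ)) := by
      intro i
      dsimp only
      split_ifs <;> omega
    have hZ := sum_ite3 (fun i => ((l' i:ℕ):ℤ)) h01 h02 h12
      ((l' i0:ℤ) + 1) ((l' i0:ℤ) + 1) ((l' i2:ℤ) - 1)
    rw [← Finset.sum_congr rfl (fun i _ => hZfun i)] at hZ
    have hcast1 : ((∑ i, (fun i => if i = i0 then l' i0 + 1 else if i = i1 then l' i0 + 1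
        else if i = i2 then l' i2 - 1 else l' i) i : ℕ):ℤ)
        = ∑ i, (((fun i => if i = i0 then l' i0 + 1 else if i = i1 then l' i0 + 1
        else if i = i2 then l' i2 - 1 else l' i) i:ℕ):ℤ) := by push_cast; rfl
    have hcast2 : ((∑ i, l' i : ℕ):ℤ) = ∑ i, ((l' i:ℕ):ℤ) := by push_cast; rfl
    have hl1 : (l' i1:ℤ) = (l' i2:ℤ) := by exact_mod_cast htwo'
    omega
  · have hcfun : ∀ i, p i ^ (1+d) * (2:ℝ)^(d * (((fun i => if i = i0 then l' i0 + 1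
        else if i = i1 then l' i0 + 1 else if i = i2 then l' i2 - 1 else l' i) i):ℝ)) =
        (if i = i0 then p i0 ^ (1+d) * (2:ℝ)^(d * ((l' i0 + 1:ℕ):ℝ))
         else if i = i1 then p i1 ^ (1+d) * (2:ℝ)^(d * ((l' i0 + 1:ℕ):ℝ))
         else if i = i2 then p i2 ^ (1+d) * (2:ℝ)^(d * ((l' i2 - 1:ℕ):ℝ))
         else p i ^ (1+d) * (2:ℝ)^(d * (l' i:ℝ))) := by
      intro i
      dsimp only
      split_ifs with ha hb hc
      · subst ha; rfl
      · subst hb; rfl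
      · subst hc; rfl
      · rfl
    have hc1 : ((l' i0 + 1:ℕ):ℝ) = (l' i0:ℝ) + 1 := by push_cast; ring
    have hc2 : ((l' i2 - 1:ℕ):ℝ) = (l' i2:ℝ) - 1 := by
      rw [Nat.cast_sub (by omega)]
      norm_num
    have hdelta := delta_ineq hd
      (Real.rpow_nonneg (hp i2).le (1+d))
      (Real.rpow_le_rpow (hp i2).le
        (hsorted i1 i2 h1le2) (by linarith))
      hcond'
      (show (l' i0:ℝ) + 2 ≤ (l' i2:ℝ) by exact_mod_cast hLu)
    rw [Finset.sum_congr rfl (fun i _ => hcfun i),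
      sum_ite3 (fun i => p i ^ (1+d) * (2:ℝ)^(d * (l' i:ℝ))) h01 h02 h12,
      htwo', hc1, hc2]
    linarith [hdelta]

set_option maxHeartbeats 1000000 in
lemma main_ineq {n : ℕ} (hn : 2 ≤ n) {d : ℝ} (hd : -1 < d) (hd0 : d ≠ 0)
    (p : Fin n → ℝ) (hp : ∀ i, 0 < p i)
    (hsorted : ∀ i j : Fin n, i ≤ j → p j ≤ p i)
    (hcond : p ⟨0, by grind⟩ ^ (1+d) ≤
      (2:ℝ)^d * (p ⟨n-2, by grind⟩ ^ (1+d) + p ⟨n-1, by grind⟩ ^ (1+d))) :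
    ∀ N (l : Fin n → ℕ), IsCode n l → (∑ i, l i) ≤ N →
    esgn d * (∑ i, p i ^ (1+d) * (2:ℝ)^(d * (lstar n i : ℝ)))
      ≤ esgn d * (∑ i, p i ^ (1+d) * (2:ℝ)^(d * (l i : ℝ))) := by
  intro N
  induction N with
  | zero =>
    intro l hl hsum
    exfalso
    have hge : (n:ℕ) ≤ ∑ i, l i := by
      calc n = ∑ _i : Fin n, 1 := by
            rw [Finset.sum_const, smul_eq_mul, mul_one, Finset.card_univ, Fintype.card_fin]
      _ ≤ ∑ i, l i := Finset.sum_le_sum (fun i _ => hl.1 i)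
    omega
  | succ N ih =>
    intro l hl hsum
    obtain ⟨l', hl'⟩ : ∃ l', l ∘ ⇑(Tuple.sort l) = l' := ⟨_, rfl⟩
    have happ : ∀ i, l (Tuple.sort l i) = l' i := fun i => congrFun hl' i
    have hmono : Monotone l' := hl' ▸ Tuple.monotone_sort l
    have hsortineq : esgn d * (∑ i, p i ^ (1+d) * (2:ℝ)^(d * (l' i : ℝ)))
        ≤ esgn d * (∑ i, p i ^ (1+d) * (2:ℝ)^(d * (l i : ℝ))) := by
      have h0 := cost_sort d p hp (by linarith) hsorted l
      have hse : (∑ i, p i ^ (1+d) * (2:ℝ)^(d * ((l (Tuple.sort l i)) : ℝ)))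
          = ∑ i, p i ^ (1+d) * (2:ℝ)^(d * (l' i : ℝ)) :=
        Finset.sum_congr rfl (fun i _ => by rw [happ i])
      rw [hse] at h0
      exact h0
    have h1' : ∀ i, 1 ≤ l' i := fun i => by rw [← happ i]; exact hl.1 _
    have hkraft' : ∑ i, (2:ℝ)^(-(l' i:ℝ)) = ∑ i, (2:ℝ)^(-(l i:ℝ)) := by
      rw [← Equiv.sum_comp (Tuple.sort l) (fun i => (2:ℝ)^(-(l i:ℝ)))]
      exact Finset.sum_congr rfl (fun i _ => by rw [happ i])
    have hl'code : IsCode n l' := ⟨h1', by rw [hkraft']; exact hl.2⟩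
    have hsumeq : ∑ i, l' i = ∑ i, l i := by
      rw [← Equiv.sum_comp (Tuple.sort l) l]
      exact Finset.sum_congr rfl (fun i _ => (happ i).symm)
    have hsuff : esgn d * (∑ i, p i ^ (1+d) * (2:ℝ)^(d * (lstar n i : ℝ)))
        ≤ esgn d * (∑ i, p i ^ (1+d) * (2:ℝ)^(d * (l' i : ℝ))) := by
      by_cases hfull : ∑ i, (2:ℝ)^(-(l' i:ℝ)) = 1
      · by_cases hflat : l' ⟨n-1, by grind⟩ ≤ l' ⟨0, by omega⟩ + 1
        · rw [full_flat_eq_lstar hn l' hmono hfull hflat]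
        · obtain ⟨l'', hcode'', hsum'', hcost''⟩ :=
            exchange_step hn hd p hp hsorted hcond l' hmono h1' hfull hflat
          have hih := ih l'' hcode'' (by omega)
          linarith
      · obtain ⟨l'', hcode'', hsum'', hcost''⟩ :=
          shorten_step hn p hp l' hmono h1' (lt_of_le_of_ne hl'code.2 hfull)
        have hih := ih l'' hcode'' (by omega)
        linarith
    linarith

theorem stmt_3 (n : ℕ) (hn : 2 ≤ n) (d : ℝ) (hd : -1 < d) (hd0 : d ≠ 0)
    (p : Fin n → ℝ) (hp : ∀ i, 0 < p i) (hpsum : ∑ i, p i = 1)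
    (hsorted : ∀ i j : Fin n, i ≤ j → p j ≤ p i)
    (hcond : p ⟨0, by omega⟩ ≤ combine d (p ⟨n - 2, by omega⟩) (p ⟨n - 1, by omega⟩)) :
    ∃ l : Fin n → ℕ, IsCode n l ∧
      expRedundancy n d p l = expRedundancyOpt n d p ∧
      ∑ i, (2 : ℝ) ^ (-(l i : ℝ)) = 1 ∧
      ∀ i, l i = Nat.log 2 n ∨ l i = Nat.clog 2 n := by
  have ha : (0:ℝ) < 1 + d := by linarith
  have hcondpow : p ⟨0, by omega⟩ ^ (1+d) ≤
      (2:ℝ)^d * (p ⟨n-2, by omega⟩ ^ (1+d) + p ⟨n-1, by omega⟩ ^ (1+d)) := by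
    have hX : (0:ℝ) ≤ (2:ℝ)^d * p ⟨n-2, by omega⟩ ^ (1+d) + (2:ℝ)^d * p ⟨n-1, by omega⟩ ^ (1+d) := by
      have h1 : (0:ℝ) < (2:ℝ)^d := Real.rpow_pos_of_pos (by norm_num) d
      have h2 : (0:ℝ) ≤ p ⟨n-2, by omega⟩ ^ (1+d) := Real.rpow_nonneg (hp _).le _
      have h3 : (0:ℝ) ≤ p ⟨n-1, by omega⟩ ^ (1+d) := Real.rpow_nonneg (hp _).le _
      nlinarith
    have h := Real.rpow_le_rpow (hp _).le hcond ha.le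
    unfold combine at h
    rw [← Real.rpow_mul hX, one_div_mul_cancel (ne_of_gt ha), Real.rpow_one] at h
    calc p ⟨0, by omega⟩ ^ (1+d) ≤ _ := h
    _ = (2:ℝ)^d * (p ⟨n-2, by omega⟩ ^ (1+d) + p ⟨n-1, by omega⟩ ^ (1+d)) := by ring
  have hcode : IsCode n (lstar n) := ⟨lstar_one_le hn, le_of_eq (lstar_kraft hn)⟩
  have hne : (Finset.univ : Finset (Fin n)).Nonempty := ⟨⟨0, by omega⟩, Finset.mem_univ _⟩
  have hcostpos : ∀ l : Fin n → ℕ, 0 < ∑ i, p i ^ (1+d) * (2:ℝ)^(d * (l i:ℝ)) := by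
    intro l
    apply Finset.sum_pos (fun i _ => ?_) hne
    exact mul_pos (Real.rpow_pos_of_pos (hp i) _) (Real.rpow_pos_of_pos (by norm_num) _)
  have hredle : ∀ l : Fin n → ℕ, IsCode n l →
      expRedundancy n d p (lstar n) ≤ expRedundancy n d p l := by
    intro l hcodel
    have hmain := main_ineq hn hd hd0 p hp hsorted hcondpow (∑ i, l i) l hcodel le_rfl
    unfold expRedundancy
    rcases lt_or_gt_of_ne hd0 with hneg | hpos
    · have he : esgn d = -1 := if_neg (by linarith)
      rw [he] at hmain
      have hcc : ∑ i, p i ^ (1+d) * (2:ℝ)^(d * (l i:ℝ))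
          ≤ ∑ i, p i ^ (1+d) * (2:ℝ)^(d * (lstar n i:ℝ)) := by linarith
      have hlog := (Real.logb_le_logb (by norm_num : (1:ℝ) < 2)
        (hcostpos l) (hcostpos (lstar n))).mpr hcc
      have hd' : (1:ℝ)/d ≤ 0 := by
        apply div_nonpos_of_nonneg_of_nonpos <;> linarith
      exact mul_le_mul_of_nonpos_left hlog hd'
    · have he : esgn d = 1 := if_pos hpos
      rw [he] at hmain
      have hcc : ∑ i, p i ^ (1+d) * (2:ℝ)^(d * (lstar n i:ℝ))
          ≤ ∑ i, p i ^ (1+d) * (2:ℝ)^(d * (l i:ℝ)) := by linarith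
      have hlog := (Real.logb_le_logb (by norm_num : (1:ℝ) < 2)
        (hcostpos (lstar n)) (hcostpos l)).mpr hcc
      have hd' : (0:ℝ) ≤ 1/d := by positivity
      exact mul_le_mul_of_nonneg_left hlog hd'
  refine ⟨lstar n, hcode, ?_, lstar_kraft hn, lstar_vals hn⟩
  unfold expRedundancyOpt
  apply le_antisymm
  · apply le_csInf
    · exact ⟨expRedundancy n d p (lstar n), ⟨lstar n, hcode, rfl⟩⟩
    · rintro r ⟨l, hcl, rfl⟩
      exact hredle l hcl
  · exact csInf_le ⟨expRedundancy n d p (lstar n), by rintro r ⟨l, hcl, rfl⟩; exact hredle l hcl⟩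
      ⟨lstar n, hcode, rfl⟩
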